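/- Let V be a finite set, Z ⊆ V, M₁ a matching (set of pairwise disjoint 2-element subsets) of V \ Z, and M₂ a matching of V such that every edge of M₂ has at most one endpoint in V(M₁) ∪ Z, where V(M) denotes the union of the edges of M. Then 2·|V \ (V(M₁) ∪ Z)| + 2·|V(M₁) ∪ V(M₂) ∪ Z| + |V \ V(M₂)| ≥ 3·|V|. Consequently, at least one of the three sets V \ (V(M₁) ∪ Z), V(M₁) ∪ V(M₂) ∪ Z, V \ V(M₂) has size at least 0.6·|V|. -/
import Mathlib


open Finset

/-- `M` is a matching of the finite set `S`: a family of pairwise disjoint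
2-element subsets of `S`. -/
def IsMatchingOf {α : Type*} [DecidableEq α] (M : Finset (Finset α)) (S : Finset α) : Prop :=
  (∀ e ∈ M, e.card = 2 ∧ e ⊆ S) ∧ ∀ e ∈ M, ∀ f ∈ M, e ≠ f → Disjoint e f

/-- The vertex set `V(M)` of a matching: the union of its edges. -/
def matchVerts {α : Type*} [DecidableEq α] (M : Finset (Finset α)) : Finset α :=
  M.biUnion id

theorem matchings_counting {α : Type*} [DecidableEq α]
    (V Z : Finset α) (M₁ M₂ : Finset (Finset α))
    (hZ : Z ⊆ V)
    (hM₁ : IsMatchingOf M₁ (V \ Z))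
    (hM₂ : IsMatchingOf M₂ V)
    (hM₂end : ∀ e ∈ M₂, (e ∩ (matchVerts M₁ ∪ Z)).card ≤ 1) :
    2 * (V \ (matchVerts M₁ ∪ Z)).card
      + 2 * (matchVerts M₁ ∪ matchVerts M₂ ∪ Z).card
      + (V \ matchVerts M₂).card ≥ 3 * V.card ∧
    ((0.6 : ℚ) * V.card ≤ (V \ (matchVerts M₁ ∪ Z)).card ∨
     (0.6 : ℚ) * V.card ≤ (matchVerts M₁ ∪ matchVerts M₂ ∪ Z).card ∨
     (0.6 : ℚ) * V.card ≤ (V \ matchVerts M₂).card) := by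
  classical
  set A : Finset α := matchVerts M₁ ∪ Z with hA
  set B : Finset α := matchVerts M₂ with hB
  have hunion : matchVerts M₁ ∪ matchVerts M₂ ∪ Z = A ∪ B := by
    rw [hA, hB, union_right_comm]
  have hAV : A ⊆ V := by
    apply union_subset _ hZ
    intro x hx
    simp only [matchVerts, mem_biUnion, id] at hx
    obtain ⟨e, he, hxe⟩ := hx
    exact (sdiff_subset) ((hM₁.1 e he).2 hxe)
  have hBV : B ⊆ V := by
    intro x hx
    simp only [hB, matchVerts, mem_biUnion, id] at hx
    obtain ⟨e, he, hxe⟩ := hx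
    exact (hM₂.1 e he).2 hxe
  have hBcard : B.card = 2 * M₂.card := by
    rw [hB, matchVerts]
    show #(M₂.biUnion fun e => e) = 2 * #M₂
    rw [card_biUnion hM₂.2]
    rw [Finset.sum_congr rfl (fun e he => (hM₂.1 e he).1), Finset.sum_const,
      smul_eq_mul, mul_comm]
  have hAB : (A ∩ B).card ≤ M₂.card := by
    have : A ∩ B = M₂.biUnion (fun e => e ∩ A) := by
      rw [hB, matchVerts, inter_comm, biUnion_inter]
      simp [id]
    rw [this]
    calc (M₂.biUnion (fun e => e ∩ A)).card ≤ ∑ e ∈ M₂, (e ∩ A).card :=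
          card_biUnion_le
      _ ≤ ∑ e ∈ M₂, 1 := Finset.sum_le_sum (fun e he => hM₂end e he)
      _ = M₂.card := by simp
  have hVA : (V \ A).card = V.card - A.card := card_sdiff_of_subset hAV
  have hVB : (V \ B).card = V.card - B.card := card_sdiff_of_subset hBV
  have hu : (A ∪ B).card + (A ∩ B).card = A.card + B.card :=
    card_union_add_card_inter A B
  have hAcard : A.card ≤ V.card := card_le_card hAV
  have hBc : B.card ≤ V.card := card_le_card hBV
  have hmain : 2 * (V \ A).card + 2 * (A ∪ B).card + (V \ B).card ≥ 3 * V.card := by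
    omega
  rw [hunion]
  refine ⟨hmain, ?_⟩
  by_contra h
  push_neg at h
  obtain ⟨h1, h2, h3⟩ := h
  have c1 : ((V \ A).card : ℚ) < 0.6 * V.card := h1
  have c2 : (((A ∪ B)).card : ℚ) < 0.6 * V.card := h2
  have c3 : ((V \ B).card : ℚ) < 0.6 * V.card := h3
  have cm : (3 : ℚ) * V.card ≤ 2 * (V \ A).card + 2 * ((A ∪ B)).card + (V \ B).card := by
    exact_mod_cast hmain
  linarith
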